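/- Let ℝ carry an o-minimal structure in which the circle S¹ = ℝ/ℤ and rotations are definable, and let R ⊋ ℝ be a real closed field with an o-minimal structure conservatively extending that of ℝ. For irrational ε ∈ ℝ, the rotation ρ_ε(t) = t + ε of S¹_R = R/ℤ is structurally stable among definable homeomorphisms: every homeomorphism ρ of R/ℤ with ρ − ρ_ε taking values in the set A = {t ∈ R : nt < 1 for all n ∈ ℤ} of infinitesimals is topologically conjugate to ρ_ε, i.e., there is a (not necessarily definable) homeomorphism π of R/ℤ with π ∘ ρ_ε = ρ ∘ π. -/

import Mathlib

open Set

namespace OMin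

variable {R : Type*} [Field R] [LinearOrder R] [IsStrictOrderedRing R]

/-- `R` is a real closed field: nonnegative elements are squares and every polynomial of odd
degree has a root. -/
def IsRealClosed (R : Type*) [Field R] [LinearOrder R] [IsStrictOrderedRing R] : Prop :=
  (∀ x : R, 0 ≤ x → ∃ y, y ^ 2 = x) ∧
    ∀ p : Polynomial R, Odd p.natDegree → ∃ x, Polynomial.eval x p = 0

/-- A simplex in `R^n`: the convex hull of affinely independent points. -/
def IsSimplex {n : ℕ} (σ : Set (Fin n → R)) : Prop :=
  ∃ (k : ℕ) (v : Fin (k + 1) → Fin n → R),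
    AffineIndependent R v ∧ σ = convexHull R (Set.range v)

/-- A compact polyhedron in `R^n`: a finite union of simplexes. -/
def IsCompactPolyhedron {n : ℕ} (X : Set (Fin n → R)) : Prop :=
  ∃ F : Finset (Set (Fin n → R)), (∀ σ ∈ F, IsSimplex σ) ∧ X = ⋃₀ ↑F

/-- `f` is piecewise linear on `X`: `X` is a finite union of simplexes on each of which `f`
is affine. -/
def IsPLOn {n : ℕ} {V : Type*} [AddCommGroup V] [Module R V]
    (f : (Fin n → R) → V) (X : Set (Fin n → R)) : Prop :=
  ∃ F : Finset (Set (Fin n → R)), (∀ σ ∈ F, IsSimplex σ) ∧ X = ⋃₀ ↑F ∧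
    ∀ σ ∈ F, ∃ g : (Fin n → R) →ᵃ[R] V, Set.EqOn f (⇑g) σ

/-- A PL homeomorphism from `X` onto `Y`: a PL bijection with PL inverse. -/
def PLHomeoOn {n m : ℕ} (f : (Fin n → R) → (Fin m → R))
    (X : Set (Fin n → R)) (Y : Set (Fin m → R)) : Prop :=
  Set.BijOn f X Y ∧ IsPLOn f X ∧
    ∃ g : (Fin m → R) → (Fin n → R), IsPLOn g Y ∧ Set.InvOn g f X Y

/-- Bounded subset of `R^n`. -/
def IsBoundedSet {n : ℕ} (X : Set (Fin n → R)) : Prop :=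
  ∃ M : R, ∀ x ∈ X, ∀ i, |x i| ≤ M

/-- The product `X × J ⊆ R^{n+1}`, encoded via `Fin.snoc`. -/
def prodI {n : ℕ} (X : Set (Fin n → R)) (J : Set R) : Set (Fin (n + 1) → R) :=
  {z | ∃ x ∈ X, ∃ t ∈ J, z = Fin.snoc x t}

/-- The product `U × W ⊆ R^{n+k}`, encoded via `Fin.append`. -/
def appendProd {n k : ℕ} (U : Set (Fin n → R)) (W : Set (Fin k → R)) :
    Set (Fin (n + k) → R) :=
  {z | ∃ x ∈ U, ∃ v ∈ W, z = Fin.append x v}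

/-- An o-minimal structure on an ordered field `R` expanding `(R,<,0,1,+,·)`:
a collection of "definable" subsets of the spaces `R^n`, closed under boolean operations and
projection, containing all sets defined by polynomial equations and inequalities, and such
that every definable subset of `R` is a finite union of points and open intervals. -/
structure Str (R : Type*) [Field R] [LinearOrder R] [IsStrictOrderedRing R] where
  Defn : ∀ {n : ℕ}, Set (Fin n → R) → Prop
  defn_union : ∀ {n : ℕ} {A B : Set (Fin n → R)}, Defn A → Defn B → Defn (A ∪ B)
  defn_compl : ∀ {n : ℕ} {A : Set (Fin n → R)}, Defn A → Defn Aᶜ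
  defn_proj : ∀ {n : ℕ} {A : Set (Fin (n + 1) → R)}, Defn A →
    Defn {x : Fin n → R | ∃ t : R, Fin.snoc x t ∈ A}
  defn_polyZero : ∀ {n : ℕ} (p : MvPolynomial (Fin n) R),
    Defn {x : Fin n → R | MvPolynomial.eval x p = 0}
  defn_polyPos : ∀ {n : ℕ} (p : MvPolynomial (Fin n) R),
    Defn {x : Fin n → R | 0 < MvPolynomial.eval x p}
  tame : ∀ A : Set (Fin 1 → R), Defn A →
    ∃ P : Finset (Set R), {t : R | (fun _ => t) ∈ A} = ⋃₀ ↑P ∧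
      ∀ J ∈ P, (∃ a, J = {a}) ∨
        (J.OrdConnected ∧ (∀ a ∈ J, ∃ b ∈ J, b < a) ∧ ∀ a ∈ J, ∃ b ∈ J, a < b)

/-- The graph of `f` restricted to `X` is definable. -/
def DefGraphOn (S : Str R) {n m : ℕ} (f : (Fin n → R) → (Fin m → R))
    (X : Set (Fin n → R)) : Prop :=
  S.Defn {z : Fin (n + m) → R | ∃ x ∈ X, z = Fin.append x (f x)}

/-- The graph of a scalar-valued function `f` restricted to `X` is definable. -/
def DefGraphFunOn (S : Str R) {n : ℕ} (f : (Fin n → R) → R)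
    (X : Set (Fin n → R)) : Prop :=
  S.Defn {z : Fin (n + 1) → R | ∃ x ∈ X, z = Fin.snoc x (f x)}

section Top

variable [TopologicalSpace R]

/-- `f` restricts to a homeomorphism from `X` onto `Y`. -/
def HomeoOn {n m : ℕ} (f : (Fin n → R) → (Fin m → R))
    (X : Set (Fin n → R)) (Y : Set (Fin m → R)) : Prop :=
  ContinuousOn f X ∧ Set.BijOn f X Y ∧
    ∃ g : (Fin m → R) → (Fin n → R), ContinuousOn g Y ∧ Set.InvOn g f X Y

/-- A definable homeomorphism from `X` onto `Y`. -/
def DefHomeoOn (S : Str R) {n m : ℕ} (f : (Fin n → R) → (Fin m → R))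
    (X : Set (Fin n → R)) (Y : Set (Fin m → R)) : Prop :=
  DefGraphOn S f X ∧ HomeoOn f X Y

/-- `A ⊆ R^n` has dimension `< d`: every projection of `A` onto at least `d` of the
coordinates has empty interior. -/
def DimLT {n : ℕ} (A : Set (Fin n → R)) (d : ℕ) : Prop :=
  ∀ s : Finset (Fin n), d ≤ s.card →
    interior ((fun (x : Fin n → R) (i : s) => x (i : Fin n)) '' A) = ∅

/-- `A` has dimension exactly `d`. -/
def DimEq {n : ℕ} (A : Set (Fin n → R)) (d : ℕ) : Prop :=
  DimLT A (d + 1) ∧ ¬ DimLT A d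

/-- A definable isotopy through homeomorphisms from `X` to `Y`:
a definable continuous map `F : X × [0,1] → Y` each of whose slices `F(·,t)`
is a homeomorphism from `X` onto `Y`. -/
def DefIsotopyThroughHomeos (S : Str R) {n m : ℕ}
    (F : (Fin (n + 1) → R) → (Fin m → R))
    (X : Set (Fin n → R)) (Y : Set (Fin m → R)) : Prop :=
  DefGraphOn S F (prodI X (Icc 0 1)) ∧ ContinuousOn F (prodI X (Icc 0 1)) ∧
    ∀ t ∈ Icc (0 : R) 1, HomeoOn (fun x => F (Fin.snoc x t)) X Y

end Top

/-- A basic semi-linear set: the solution set of finitely many affine (weak or strict)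
inequalities. -/
def IsBasicSemiLinear {n : ℕ} (A : Set (Fin n → R)) : Prop :=
  ∃ (k : ℕ) (g : Fin k → ((Fin n → R) →ᵃ[R] R)) (strict : Fin k → Bool),
    A = {x | ∀ i, if strict i then 0 < g i x else 0 ≤ g i x}

/-- A semi-linear set: a finite union of basic semi-linear sets. This is exactly a set
definable in the o-minimal structure `(R,<,0,+,(c·)_{c ∈ R})`. -/
def IsSemiLinear {n : ℕ} (A : Set (Fin n → R)) : Prop :=
  ∃ F : Finset (Set (Fin n → R)), (∀ B ∈ F, IsBasicSemiLinear B) ∧ A = ⋃₀ ↑F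

/-- The graph of `f` restricted to `X` is semi-linear. -/
def SLGraphOn {n m : ℕ} (f : (Fin n → R) → (Fin m → R)) (X : Set (Fin n → R)) : Prop :=
  IsSemiLinear {z : Fin (n + m) → R | ∃ x ∈ X, z = Fin.append x (f x)}

section Top2

variable [TopologicalSpace R]

/-- A semi-linear homeomorphism from `Y` onto `Z`. -/
def SLHomeoOn {n m : ℕ} (f : (Fin n → R) → (Fin m → R))
    (Y : Set (Fin n → R)) (Z : Set (Fin m → R)) : Prop :=
  SLGraphOn f Y ∧ HomeoOn f Y Z

/-- A standard family of semi-linear sets `(Y, Y_i)`: `Y` is bounded and semi-linear and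
every point of `cl Y − Y` has a semi-linear neighborhood `U` in `cl Y` such that
`(U, U ∩ Y, U ∩ Y_i)` is semi-linearly homeomorphic to
`(V × [0,1), V × (0,1), V_i × (0,1))` for some semi-linear sets `(V, V_i)` (a local collar). -/
def IsStandardFam {n k : ℕ} (Y : Set (Fin n → R)) (Yi : Fin k → Set (Fin n → R)) : Prop :=
  IsSemiLinear Y ∧ IsBoundedSet Y ∧ (∀ i, IsSemiLinear (Yi i) ∧ Yi i ⊆ Y) ∧
    ∀ x ∈ closure Y \ Y, ∃ U : Set (Fin n → R), IsSemiLinear U ∧ U ⊆ closure Y ∧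
      (∃ W, IsOpen W ∧ x ∈ W ∧ W ∩ closure Y ⊆ U) ∧
      ∃ (m : ℕ) (V : Set (Fin m → R)) (Vi : Fin k → Set (Fin m → R))
        (φ : (Fin (m + 1) → R) → (Fin n → R)),
        IsSemiLinear V ∧ (∀ i, IsSemiLinear (Vi i) ∧ Vi i ⊆ V) ∧
        SLHomeoOn φ (prodI V (Ico 0 1)) U ∧
        φ '' prodI V (Ioo 0 1) = U ∩ Y ∧
        ∀ i, φ '' prodI (Vi i) (Ioo 0 1) = U ∩ Yi i

end Top2

/-- The convex cell spanned by a finite set of points. -/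
def CellOf {n : ℕ} (V : Finset (Fin n → R)) : Set (Fin n → R) :=
  convexHull R ↑V

/-- A finite cell complex: a finite collection of (nonempty) convex cells, any two of which
meet along a common face (an extreme subset) belonging to the collection. -/
def IsCellComplex {n : ℕ} (C : Finset (Finset (Fin n → R))) : Prop :=
  (∀ V ∈ C, V.Nonempty) ∧
    ∀ V ∈ C, ∀ W ∈ C, CellOf V ∩ CellOf W = ∅ ∨
      ∃ U ∈ C, CellOf V ∩ CellOf W = CellOf U ∧
        IsExtreme R (CellOf V) (CellOf U) ∧ IsExtreme R (CellOf W) (CellOf U)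

/-- The underlying polyhedron of a cell complex. -/
def CplxSpace {n : ℕ} (C : Finset (Finset (Fin n → R))) : Set (Fin n → R) :=
  ⋃ V ∈ C, CellOf V

/-- A PL `d`-ball: a set PL homeomorphic to a `d`-simplex. -/
def IsPLBall {n : ℕ} (d : ℕ) (B : Set (Fin n → R)) : Prop :=
  ∃ (v : Fin (d + 1) → Fin d → R) (g : (Fin n → R) → (Fin d → R)),
    AffineIndependent R v ∧ PLHomeoOn g B (convexHull R (Set.range v))

section Top3

variable [TopologicalSpace R]

/-- A compact PL `d`-manifold with boundary: a compact polyhedron in which every point has a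
closed neighborhood that is a PL `d`-ball. -/
def IsPLManifoldWithBoundary {n : ℕ} (d : ℕ) (X : Set (Fin n → R)) : Prop :=
  IsCompactPolyhedron X ∧
    ∀ x ∈ X, ∃ N : Set (Fin n → R), N ⊆ X ∧ IsCompactPolyhedron N ∧
      (∃ U, IsOpen U ∧ x ∈ U ∧ U ∩ X ⊆ N) ∧ IsPLBall d N

/-- A (possibly noncompact) polyhedron: a locally finite union of simplexes. -/
def IsPolyhedron {n : ℕ} (X : Set (Fin n → R)) : Prop :=
  ∃ F : Set (Set (Fin n → R)), (∀ σ ∈ F, IsSimplex σ) ∧ X = ⋃₀ F ∧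
    ∀ x ∈ X, ∃ W, IsOpen W ∧ x ∈ W ∧ {σ | σ ∈ F ∧ (σ ∩ W).Nonempty}.Finite

/-- `f` is piecewise linear on the (possibly noncompact) polyhedron `X`. -/
def IsLocPLOn {n m : ℕ} (f : (Fin n → R) → (Fin m → R)) (X : Set (Fin n → R)) : Prop :=
  ∃ F : Set (Set (Fin n → R)), (∀ σ ∈ F, IsSimplex σ) ∧ X = ⋃₀ F ∧
    (∀ x ∈ X, ∃ W, IsOpen W ∧ x ∈ W ∧ {σ | σ ∈ F ∧ (σ ∩ W).Nonempty}.Finite) ∧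
    ∀ σ ∈ F, ∃ g : (Fin n → R) →ᵃ[R] (Fin m → R), Set.EqOn f (⇑g) σ

/-- A PL homeomorphism between possibly noncompact polyhedra. -/
def LocPLHomeoOn {n m : ℕ} (f : (Fin n → R) → (Fin m → R))
    (X : Set (Fin n → R)) (Y : Set (Fin m → R)) : Prop :=
  Set.BijOn f X Y ∧ IsLocPLOn f X ∧
    ∃ g : (Fin m → R) → (Fin n → R), IsLocPLOn g Y ∧ Set.InvOn g f X Y

end Top3

/-- Graph of `f` on `X`, as a subset of `R^{n+m}`. -/
def GraphOn {n m : ℕ} (f : (Fin n → R) → (Fin m → R)) (X : Set (Fin n → R)) :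
    Set (Fin (n + m) → R) :=
  {z | ∃ x ∈ X, z = Fin.append x (f x)}

/-- `XR ⊆ R^n` is the `R`-extension of the compact polyhedron `X ⊆ ℝ^n` along the order
embedding `ι : ℝ → R`: both are obtained from a common finite family of simplexes (given by
their affinely independent vertex sets), taking convex hulls over `ℝ` resp. over `R`. -/
def ExtendsPoly (ι : ℝ →+* R) {n : ℕ} (X : Set (Fin n → ℝ)) (XR : Set (Fin n → R)) : Prop :=
  ∃ 𝒱 : Finset (Finset (Fin n → ℝ)),
    (∀ V ∈ 𝒱, AffineIndependent ℝ (fun v : {x // x ∈ V} => (v : Fin n → ℝ))) ∧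
    X = ⋃ V ∈ 𝒱, convexHull ℝ (V : Set (Fin n → ℝ)) ∧
    XR = ⋃ V ∈ 𝒱, convexHull R
      ((fun (x : Fin n → ℝ) (i : Fin n) => ι (x i)) '' (V : Set (Fin n → ℝ)))

/-- `fR` (on `XR`) is the `R`-extension of the map `f` (on `X`): its graph extends the
graph of `f`. -/
def ExtendsMap (ι : ℝ →+* R) {n m : ℕ} (f : (Fin n → ℝ) → (Fin m → ℝ))
    (X : Set (Fin n → ℝ)) (fR : (Fin n → R) → (Fin m → R)) (XR : Set (Fin n → R)) : Prop :=
  ExtendsPoly ι (GraphOn f X) (GraphOn fR XR)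

/-- PL homotopy between maps `X → Y`. -/
def PLHomotopic {n m : ℕ} (f g : (Fin n → R) → (Fin m → R))
    (X : Set (Fin n → R)) (Y : Set (Fin m → R)) : Prop :=
  ∃ H : (Fin (n + 1) → R) → (Fin m → R),
    IsPLOn H (prodI X (Icc 0 1)) ∧ Set.MapsTo H (prodI X (Icc 0 1)) Y ∧
    (∀ x ∈ X, H (Fin.snoc x 0) = f x) ∧ ∀ x ∈ X, H (Fin.snoc x 1) = g x

/-- PL isotopy between embeddings `X → Y`: a PL homotopy each of whose slices is an
embedding. -/
def PLIsotopic {n m : ℕ} (f g : (Fin n → R) → (Fin m → R))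
    (X : Set (Fin n → R)) (Y : Set (Fin m → R)) : Prop :=
  ∃ H : (Fin (n + 1) → R) → (Fin m → R),
    IsPLOn H (prodI X (Icc 0 1)) ∧ Set.MapsTo H (prodI X (Icc 0 1)) Y ∧
    (∀ x ∈ X, H (Fin.snoc x 0) = f x) ∧ (∀ x ∈ X, H (Fin.snoc x 1) = g x) ∧
    ∀ t ∈ Icc (0 : R) 1, Set.InjOn (fun x => H (Fin.snoc x t)) X

/-- Ambient PL isotopy: the embeddings `f, g : X → Y` differ by a PL isotopy of `Y`
starting at the identity. -/
def AmbPLIsotopic {n m : ℕ} (f g : (Fin n → R) → (Fin m → R))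
    (X : Set (Fin n → R)) (Y : Set (Fin m → R)) : Prop :=
  ∃ G : (Fin (m + 1) → R) → (Fin m → R),
    IsPLOn G (prodI Y (Icc 0 1)) ∧ Set.MapsTo G (prodI Y (Icc 0 1)) Y ∧
    (∀ y ∈ Y, G (Fin.snoc y 0) = y) ∧
    (∀ t ∈ Icc (0 : R) 1, Set.BijOn (fun y => G (Fin.snoc y t)) Y Y) ∧
    ∀ x ∈ X, G (Fin.snoc (f x) 1) = g x

/-- A PL embedding of `X` into `Y`. -/
def PLEmbeddingOn {n m : ℕ} (f : (Fin n → R) → (Fin m → R))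
    (X : Set (Fin n → R)) (Y : Set (Fin m → R)) : Prop :=
  IsPLOn f X ∧ Set.MapsTo f X Y ∧ Set.InjOn f X

section Micro

variable [TopologicalSpace R]

/-- A definable microbundle `B → E → B` with fiber dimension `k`:
definable continuous maps `i : B → E` (zero section) and `j : E → B` (projection) with
`j ∘ i = id`, which is locally trivial in the definable category (Milnor's condition). -/
def IsDefMicrobundle (S : Str R) {n m : ℕ} (k : ℕ)
    (B : Set (Fin n → R)) (E : Set (Fin m → R))
    (i : (Fin n → R) → (Fin m → R)) (j : (Fin m → R) → (Fin n → R)) : Prop :=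
  S.Defn B ∧ S.Defn E ∧ DefGraphOn S i B ∧ DefGraphOn S j E ∧
  ContinuousOn i B ∧ ContinuousOn j E ∧ Set.MapsTo i B E ∧ Set.MapsTo j E B ∧
  (∀ b ∈ B, j (i b) = b) ∧
  ∀ b ∈ B, ∃ (U : Set (Fin n → R)) (V : Set (Fin m → R))
      (h : (Fin m → R) → (Fin (n + k) → R)),
    b ∈ U ∧ U ⊆ B ∧ (∃ W, IsOpen W ∧ U = W ∩ B) ∧
    i b ∈ V ∧ V ⊆ E ∧ (∃ W, IsOpen W ∧ V = W ∩ E) ∧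
    Set.MapsTo i U V ∧ Set.MapsTo j V U ∧
    DefGraphOn S h V ∧ HomeoOn h V (appendProd U (univ : Set (Fin k → R))) ∧
    (∀ x ∈ U, h (i x) = Fin.append x 0) ∧
    ∀ e ∈ V, ∀ idx : Fin n, h e (Fin.castAdd k idx) = j e idx

/-- A PL microbundle with fiber dimension `k` over a compact polyhedral base. -/
def IsPLMicrobundle {n m : ℕ} (k : ℕ)
    (B : Set (Fin n → R)) (E : Set (Fin m → R))
    (i : (Fin n → R) → (Fin m → R)) (j : (Fin m → R) → (Fin n → R)) : Prop :=
  IsCompactPolyhedron B ∧ IsPolyhedron E ∧ IsPLOn i B ∧ IsLocPLOn j E ∧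
  Set.MapsTo i B E ∧ Set.MapsTo j E B ∧
  (∀ b ∈ B, j (i b) = b) ∧
  ∀ b ∈ B, ∃ (U : Set (Fin n → R)) (V : Set (Fin m → R))
      (h : (Fin m → R) → (Fin (n + k) → R)),
    b ∈ U ∧ U ⊆ B ∧ (∃ W, IsOpen W ∧ U = W ∩ B) ∧
    i b ∈ V ∧ V ⊆ E ∧ (∃ W, IsOpen W ∧ V = W ∩ E) ∧
    Set.MapsTo i U V ∧ Set.MapsTo j V U ∧
    LocPLHomeoOn h V (appendProd U (univ : Set (Fin k → R))) ∧
    (∀ x ∈ U, h (i x) = Fin.append x 0) ∧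
    ∀ e ∈ V, ∀ idx : Fin n, h e (Fin.castAdd k idx) = j e idx

/-- Definable isomorphism of microbundles over the same base `B`: a definable homeomorphism
between neighborhoods of the zero sections commuting with the zero sections and the
projections (germ equivalence near the zero section). -/
def DefMicroIso (S : Str R) {n m₁ m₂ : ℕ} (B : Set (Fin n → R))
    (E₁ : Set (Fin m₁ → R)) (i₁ : (Fin n → R) → (Fin m₁ → R))
    (j₁ : (Fin m₁ → R) → (Fin n → R))
    (E₂ : Set (Fin m₂ → R)) (i₂ : (Fin n → R) → (Fin m₂ → R))
    (j₂ : (Fin m₂ → R) → (Fin n → R)) : Prop :=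
  ∃ (V₁ : Set (Fin m₁ → R)) (V₂ : Set (Fin m₂ → R))
    (h : (Fin m₁ → R) → (Fin m₂ → R)),
    V₁ ⊆ E₁ ∧ V₂ ⊆ E₂ ∧ i₁ '' B ⊆ V₁ ∧ i₂ '' B ⊆ V₂ ∧
    (∃ W, IsOpen W ∧ i₁ '' B ⊆ W ∧ W ∩ E₁ ⊆ V₁) ∧
    (∃ W, IsOpen W ∧ i₂ '' B ⊆ W ∧ W ∩ E₂ ⊆ V₂) ∧
    DefGraphOn S h V₁ ∧ HomeoOn h V₁ V₂ ∧
    (∀ b ∈ B, h (i₁ b) = i₂ b) ∧ ∀ e ∈ V₁, j₂ (h e) = j₁ e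

end Micro

end OMin


namespace Stmt18Aux

variable {R : Type*} [Field R] [LinearOrder R] [IsStrictOrderedRing R]

/-- The subgroup of infinitesimals. -/
def infSub (R : Type*) [Field R] [LinearOrder R] [IsStrictOrderedRing R] : AddSubgroup R where
  carrier := {t : R | ∀ z : ℤ, |z • t| < 1}
  zero_mem' := by intro z; simp
  add_mem' := by
    intro a b ha hb z
    have h2a := ha (2 * z)
    have h2b := hb (2 * z)
    rw [zsmul_eq_mul] at h2a h2b ⊢
    push_cast at h2a h2b
    rw [mul_assoc, abs_mul, abs_two] at h2a h2b
    rw [mul_add]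
    calc |(z : R) * a + (z : R) * b| ≤ |(z : R) * a| + |(z : R) * b| := abs_add_le _ _
      _ < 1 := by linarith
  neg_mem' := by
    intro a ha z
    rw [smul_neg, abs_neg]
    exact ha z

lemma map_abs (ι : ℝ →+* R) (hι : StrictMono ι) (x : ℝ) : |ι x| = ι |x| := by
  rcases le_or_gt 0 x with h | h
  · rw [abs_of_nonneg h, abs_of_nonneg]
    rw [← map_zero ι]; exact hι.monotone h
  · rw [abs_of_neg h, abs_of_neg, map_neg]
    rw [← map_zero ι]; exact hι h

lemma exists_infinitesimal (ι : ℝ →+* R) (hι : StrictMono ι)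
    (hproper : ∃ r : R, r ∉ Set.range ι) :
    ∃ δ : R, 0 < δ ∧ ∀ q : ℝ, 0 < q → δ < ι q := by
  obtain ⟨r, hr⟩ := hproper
  by_cases hbd : ∃ M : ℝ, |r| ≤ ι M
  · obtain ⟨M, hM⟩ := hbd
    set S := {q : ℝ | ι q < r} with hS
    have habs := abs_le.mp hM
    have hne : S.Nonempty := by
      refine ⟨-(M + 1), ?_⟩
      have h1 : ι (-(M + 1)) < -(ι M) := by
        rw [map_neg]
        exact neg_lt_neg (hι (lt_add_one M))
      have := habs.1
      simp only [hS, mem_setOf_eq]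
      linarith
    have hub : ∀ q ∈ S, q ≤ M := by
      intro q hq
      have : ι q < ι M := lt_of_lt_of_le (lt_of_lt_of_le hq (le_abs_self r)) hM
      exact le_of_lt (hι.lt_iff_lt.mp this)
    have hbdd : BddAbove S := ⟨M, fun q hq => hub q hq⟩
    set c := sSup S with hc
    have hkey : ∀ q : ℝ, 0 < q → |r - ι c| < ι q := by
      intro q hq
      rw [abs_sub_lt_iff]
      constructor
      · by_contra h
        push_neg at h
        have hmem : c + q / 2 ∈ S := by
          simp only [hS, mem_setOf_eq, map_add]
          have : ι (q / 2) < ι q := hι (by linarith)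
          linarith
        have := le_csSup hbdd hmem
        linarith
      · by_contra h
        push_neg at h
        have hub2 : ∀ x ∈ S, x ≤ c - q := by
          intro x hx
          have hxc : ι x < ι (c - q) := by
            rw [map_sub]
            calc ι x < r := hx
              _ ≤ ι c - ι q := by linarith
          exact le_of_lt (hι.lt_iff_lt.mp hxc)
        have := csSup_le hne hub2
        linarith
    refine ⟨|r - ι c|, ?_, hkey⟩
    rw [abs_pos, sub_ne_zero]
    intro h
    exact hr ⟨c, h.symm⟩
  · push_neg at hbd
    have h0 : (0 : R) < |r| := lt_of_le_of_lt (by rw [map_zero]) (hbd 0)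
    refine ⟨|r|⁻¹, inv_pos.mpr h0, ?_⟩
    intro q hq
    have h1 : ι q⁻¹ < |r| := hbd q⁻¹
    have h2 : (0 : R) < ι q⁻¹ := by
      rw [← map_zero ι]; exact hι (inv_pos.mpr hq)
    calc |r|⁻¹ < (ι q⁻¹)⁻¹ := by exact inv_strictAnti₀ h2 h1
      _ = ι q := by rw [map_inv₀, inv_inv]

lemma mem_infSub_of_small (ι : ℝ →+* R) (hι : StrictMono ι)
    {δ : R} (hδ : ∀ q : ℝ, 0 < q → δ < ι q)
    {t : R} (ht : |t| ≤ δ) : t ∈ infSub R := by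
  intro z
  rcases eq_or_ne z 0 with rfl | hz
  · simp
  rw [zsmul_eq_mul, abs_mul]
  have hq : (0 : ℝ) < (1 : ℝ) / ((|z| : ℝ) + 1) := by positivity
  have hδq := hδ _ hq
  have hcast : |(z : R)| = ι ((|z| : ℤ) : ℝ) := by
    rw [← Int.cast_abs, ← map_intCast ι (|z| : ℤ), map_intCast]
  have hzpos : (0 : R) < |(z : R)| := by
    rw [abs_pos]
    exact_mod_cast hz
  calc |(z : R)| * |t| ≤ |(z : R)| * δ :=
        mul_le_mul_of_nonneg_left ht (abs_nonneg _)
    _ < |(z : R)| * ι (1 / ((|z| : ℝ) + 1)) :=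
        mul_lt_mul_of_pos_left hδq hzpos
    _ = ι (((|z| : ℤ) : ℝ) * (1 / ((|z| : ℝ) + 1))) := by
        rw [map_mul, hcast]
    _ < ι 1 := by
        apply hι
        have hz1 : (0 : ℝ) < (|z| : ℝ) := by exact_mod_cast abs_pos.mpr hz
        push_cast
        rw [mul_one_div, div_lt_one (by linarith)]
        linarith
    _ = 1 := map_one ι

lemma real_not_infinitesimal (ι : ℝ →+* R) (hι : StrictMono ι)
    {s : ℝ} (hs : ι s ∈ infSub R) : s = 0 := by
  by_contra h
  have hs0 : (0 : ℝ) < |s| := abs_pos.mpr h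
  obtain ⟨n, hn⟩ := exists_nat_gt (1 / |s|)
  have hn' : (1 : ℝ) < (n : ℝ) * |s| := by
    rw [div_lt_iff₀ hs0] at hn
    linarith
  have h1 := hs (n : ℤ)
  rw [zsmul_eq_mul] at h1
  have e1 : ((n : ℤ) : R) * ι s = ι ((n : ℝ) * s) := by
    rw [map_mul, map_natCast]
    push_cast
    ring
  rw [e1, map_abs ι hι] at h1
  have : |(n : ℝ) * s| < 1 := by
    have h2 : ι |(n : ℝ) * s| < ι 1 := by rw [map_one]; exact h1
    exact hι.lt_iff_lt.mp h2
  rw [abs_mul, Nat.abs_cast] at this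
  linarith

end Stmt18Aux

namespace Stmt18Aux

lemma isOpen_infSub {R : Type*} [Field R] [LinearOrder R] [IsStrictOrderedRing R] [TopologicalSpace R] [OrderTopology R]
    (ι : ℝ →+* R) (hι : StrictMono ι) (hproper : ∃ r : R, r ∉ Set.range ι) :
    IsOpen ((infSub R : AddSubgroup R) : Set R) := by
  obtain ⟨δ, hδpos, hδ⟩ := exists_infinitesimal ι hι hproper
  rw [isOpen_iff_mem_nhds]
  intro t ht
  have hIoo : Ioo (t - δ) (t + δ) ∈ nhds t := Ioo_mem_nhds (by linarith) (by linarith)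
  refine Filter.mem_of_superset hIoo ?_
  intro s hs
  have h1 : |s - t| ≤ δ := by
    rw [abs_le]
    constructor
    · linarith [hs.1]
    · linarith [hs.2]
  have h2 : s - t ∈ infSub R := mem_infSub_of_small ι hι hδ h1
  have e1 : s = t + (s - t) := by ring
  rw [e1]
  exact AddSubgroup.add_mem _ ht h2

theorem main {G : Type*} [AddCommGroup G] [TopologicalSpace G] [IsTopologicalAddGroup G]
    (Abar : AddSubgroup G) (hopen : IsOpen (Abar : Set G)) (e : G)
    (hfree : ∀ m : ℤ, m • e ∈ Abar → m = 0)
    (ρ : G ≃ₜ G) (hrho : ∀ x, ρ x - x - e ∈ Abar) :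
    ∃ π : G ≃ₜ G, ∀ x, π (x + e) = ρ (π x) := by
  classical
  set C : AddSubgroup G := Abar ⊔ AddSubgroup.zmultiples e with hC
  have hAleC : Abar ≤ C := le_sup_left
  have hAC : ∀ a : G, a ∈ Abar → a ∈ C := fun a ha => hAleC ha
  have hEleC : AddSubgroup.zmultiples e ≤ C := le_sup_right
  have heC : e ∈ C := hEleC (AddSubgroup.mem_zmultiples e)
  set base : G → G := fun x => (QuotientAddGroup.mk x : G ⧸ C).out with hbasedef
  have hbase_spec : ∀ x : G, x - base x ∈ C := by
    intro x
    have h1 : ((base x : G) : G ⧸ C) = (x : G ⧸ C) := QuotientAddGroup.out_eq' _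
    have h2 := (QuotientAddGroup.eq (s := C)).mp h1.symm
    have e1 : x - base x = -(-x + base x) := by abel
    rw [e1]
    exact C.neg_mem h2
  have hbase_add : ∀ x c, c ∈ C → base (x + c) = base x := by
    intro x c hc
    have h1 : ((x + c : G) : G ⧸ C) = (x : G ⧸ C) := by
      rw [QuotientAddGroup.eq]
      have : -(x + c) + x = -c := by abel
      rw [this]
      exact C.neg_mem hc
    show ((x + c : G) : G ⧸ C).out = ((x : G) : G ⧸ C).out
    rw [h1]
  have hdec : ∀ x : G, ∃ m : ℤ, x - base x - m • e ∈ Abar := by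
    intro x
    obtain ⟨a, ha, b, hb, hab⟩ := (AddSubgroup.mem_sup).mp (hbase_spec x)
    obtain ⟨m, hm⟩ := (AddSubgroup.mem_zmultiples_iff).mp hb
    refine ⟨m, ?_⟩
    have : x - base x - m • e = a := by rw [← hab, ← hm]; abel
    rw [this]
    exact ha
  choose μ hμ using hdec
  have huniq : ∀ x (m : ℤ), x - base x - m • e ∈ Abar → m = μ x := by
    intro x m hm
    have h2 := hμ x
    have h3 : (μ x - m) • e ∈ Abar := by
      have e1 : (μ x - m) • e = (x - base x - m • e) - (x - base x - μ x • e) := by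
        rw [sub_zsmul]; abel
      rw [e1]
      exact Abar.sub_mem hm h2
    have := hfree _ h3
    omega
  have hμ_add : ∀ x a, a ∈ Abar → μ (x + a) = μ x := by
    intro x a ha
    refine (huniq (x + a) (μ x) ?_).symm
    rw [hbase_add x a (hAC a ha)]
    have e1 : x + a - base x - μ x • e = (x - base x - μ x • e) + a := by abel
    rw [e1]
    exact Abar.add_mem (hμ x) ha
  have hμ_e : ∀ x, μ (x + e) = μ x + 1 := by
    intro x
    refine (huniq (x + e) (μ x + 1) ?_).symm
    rw [hbase_add x e heC]
    have e1 : x + e - base x - (μ x + 1) • e = x - base x - μ x • e := by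
      rw [add_zsmul, one_zsmul]; abel
    rw [e1]
    exact hμ x
  -- iterates of ρ
  set P : ℤ → Equiv.Perm G := fun m => ρ.toEquiv ^ m with hPdef
  have hPcont : ∀ m : ℤ, Continuous (P m) := by
    have hnat : ∀ (f : G ≃ₜ G) (n : ℕ), Continuous ((f.toEquiv ^ n : Equiv.Perm G)) := by
      intro f n
      induction n with
      | zero => simpa using continuous_id
      | succ k ih =>
        rw [pow_succ]
        have : ⇑(f.toEquiv ^ k * f.toEquiv) = ⇑(f.toEquiv ^ k) ∘ ⇑f := rfl
        rw [this]
        exact ih.comp f.continuous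
    intro m
    cases m with
    | ofNat n =>
      show Continuous ((ρ.toEquiv ^ (Int.ofNat n) : Equiv.Perm G))
      rw [Int.ofNat_eq_coe, zpow_natCast]
      exact hnat ρ n
    | negSucc n =>
      show Continuous ((ρ.toEquiv ^ (Int.negSucc n) : Equiv.Perm G))
      rw [zpow_negSucc, ← inv_pow]
      have : (ρ.toEquiv⁻¹ : Equiv.Perm G) = ρ.symm.toEquiv := rfl
      rw [this]
      exact hnat ρ.symm (n + 1)
  have hP1 : ∀ (m : ℤ) (x : G), P (m + 1) x = ρ (P m x) := by
    intro m x
    show (ρ.toEquiv ^ (m + 1)) x = ρ ((ρ.toEquiv ^ m) x)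
    rw [add_comm m 1, zpow_add, zpow_one, Equiv.Perm.mul_apply]
    rfl
  have hP1' : ∀ (m : ℤ) (x : G), P (m - 1) x = ρ.symm (P m x) := by
    intro m x
    show (ρ.toEquiv ^ (m - 1)) x = ρ.symm ((ρ.toEquiv ^ m) x)
    have e1 : m - 1 = -1 + m := by omega
    rw [e1, zpow_add, Equiv.Perm.mul_apply, zpow_neg_one]
    rfl
  have hPinv : ∀ (m : ℤ) (x : G), P (-m) (P m x) = x := by
    intro m x
    show (ρ.toEquiv ^ (-m)) ((ρ.toEquiv ^ m) x) = x
    rw [← Equiv.Perm.mul_apply, ← zpow_add, neg_add_cancel, zpow_zero]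
    rfl
  have hrs : ∀ y, ρ.symm y - y + e ∈ Abar := by
    intro y
    have h1 := hrho (ρ.symm y)
    rw [ρ.apply_symm_apply] at h1
    have e1 : ρ.symm y - y + e = -(y - ρ.symm y - e) := by abel
    rw [e1]
    exact Abar.neg_mem h1
  have hPA : ∀ (m : ℤ) (x : G), P m x - x - m • e ∈ Abar := by
    intro m
    induction m using Int.induction_on with
    | zero =>
      intro x
      have : P 0 x = x := by
        show (ρ.toEquiv ^ (0 : ℤ)) x = x
        rw [zpow_zero]; rfl
      rw [this]
      simpa using Abar.zero_mem
    | succ k ih =>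
      intro x
      have h1 := hrho (P k x)
      have h2 := ih x
      have e1 : P ((k : ℤ) + 1) x - x - ((k : ℤ) + 1) • e =
          (ρ (P k x) - P k x - e) + (P k x - x - (k : ℤ) • e) := by
        rw [hP1, add_zsmul, one_zsmul]; abel
      rw [e1]
      exact Abar.add_mem h1 h2
    | pred k ih =>
      intro x
      have h1 := hrs (P (-(k : ℤ)) x)
      have h2 := ih x
      have e1 : P (-(k : ℤ) - 1) x - x - (-(k : ℤ) - 1) • e =
          (ρ.symm (P (-(k : ℤ)) x) - P (-(k : ℤ)) x + e) + (P (-(k : ℤ)) x - x - (-(k : ℤ)) • e) := by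
        rw [hP1', sub_zsmul, one_zsmul]; abel
      rw [e1]
      exact Abar.add_mem h1 h2
  set π : G → G := fun x => P (μ x) (x - μ x • e) with hπdef
  set σ : G → G := fun y => P (-(μ y)) y + μ y • e with hσdef
  have hπA : ∀ x, π x - x ∈ Abar := by
    intro x
    have h := hPA (μ x) (x - μ x • e)
    have e1 : π x - x = P (μ x) (x - μ x • e) - (x - μ x • e) - μ x • e := by
      show P (μ x) (x - μ x • e) - x = _
      abel
    rw [e1]
    exact h
  have hμπ : ∀ x, μ (π x) = μ x := by
    intro x
    have h := hμ_add x (π x - x) (hπA x)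
    have e1 : x + (π x - x) = π x := by abel
    rw [e1] at h
    exact h
  have hσA : ∀ y, σ y - y ∈ Abar := by
    intro y
    have h := hPA (-(μ y)) y
    have e1 : σ y - y = P (-(μ y)) y - y - (-(μ y)) • e := by
      show P (-(μ y)) y + μ y • e - y = _
      rw [neg_zsmul]
      abel
    rw [e1]
    exact h
  have hμσ : ∀ y, μ (σ y) = μ y := by
    intro y
    have h := hμ_add y (σ y - y) (hσA y)
    have e1 : y + (σ y - y) = σ y := by abel
    rw [e1] at h
    exact h
  have hleft : ∀ x, σ (π x) = x := by
    intro x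
    show P (-(μ (π x))) (π x) + μ (π x) • e = x
    rw [hμπ x]
    show P (-(μ x)) (P (μ x) (x - μ x • e)) + μ x • e = x
    rw [hPinv]
    abel
  have hright : ∀ y, π (σ y) = y := by
    intro y
    show P (μ (σ y)) (σ y - μ (σ y) • e) = y
    rw [hμσ y]
    show P (μ y) ((P (-(μ y)) y + μ y • e) - μ y • e) = y
    rw [add_sub_cancel_right]
    have h := hPinv (-(μ y)) y
    rw [neg_neg] at h
    exact h
  have hconj : ∀ x, π (x + e) = ρ (π x) := by
    intro x
    show P (μ (x + e)) ((x + e) - μ (x + e) • e) = ρ (π x)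
    rw [hμ_e x]
    have e2 : (x + e) - (μ x + 1) • e = x - μ x • e := by
      rw [add_zsmul, one_zsmul]; abel
    rw [e2, hP1]
  have hnhds : ∀ x : G, {y : G | μ y = μ x} ∈ nhds x := by
    intro x
    have himg : IsOpen ((fun a => x + a) '' (Abar : Set G)) :=
      (Homeomorph.addLeft x).isOpenMap _ hopen
    have hxmem : x ∈ (fun a => x + a) '' (Abar : Set G) :=
      ⟨0, Abar.zero_mem, add_zero x⟩
    refine Filter.mem_of_superset (himg.mem_nhds hxmem) ?_
    rintro y ⟨a, ha, rfl⟩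
    exact hμ_add x a ha
  have hcontπ : Continuous π := by
    rw [continuous_iff_continuousAt]
    intro x
    have hg : Continuous (fun y => P (μ x) (y - μ x • e)) :=
      (hPcont (μ x)).comp (continuous_id.sub continuous_const)
    refine hg.continuousAt.congr ?_
    filter_upwards [hnhds x] with y hy
    show P (μ x) (y - μ x • e) = π y
    rw [← hy]
  have hcontσ : Continuous σ := by
    rw [continuous_iff_continuousAt]
    intro x
    have hg : Continuous (fun y => P (-(μ x)) y + μ x • e) :=
      ((hPcont (-(μ x))).comp continuous_id).add continuous_const
    refine hg.continuousAt.congr ?_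
    filter_upwards [hnhds x] with y hy
    show P (-(μ x)) y + μ x • e = σ y
    rw [← hy]
  exact ⟨⟨⟨π, σ, hleft, hright⟩, hcontπ, hcontσ⟩, hconj⟩

end Stmt18Aux

open OMin Set in
/-- structural stability of irrational rotations of `S¹_R = R/ℤ` over a real
closed field `R` properly containing `ℝ`: every homeomorphism `ρ` of `R/ℤ` that differs
from the rotation `ρ_ε` by infinitesimals (elements of `A = {t : ∀ n ∈ ℤ, |nt| < 1}`) is
topologically conjugate to `ρ_ε` via a (not necessarily definable) homeomorphism `π`. -/
theorem statement_18 {R : Type*} [Field R] [LinearOrder R] [IsStrictOrderedRing R] [TopologicalSpace R] [OrderTopology R]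
    (hR : OMin.IsRealClosed R) (ι : ℝ →+* R) (hι : StrictMono ι)
    (hproper : ∃ r : R, r ∉ Set.range ι)
    (ε : ℝ) (hε : Irrational ε)
    (ρ : (R ⧸ AddSubgroup.zmultiples (1 : R)) ≃ₜ (R ⧸ AddSubgroup.zmultiples (1 : R)))
    (hρ : ∀ x : R ⧸ AddSubgroup.zmultiples (1 : R),
      ρ x - (x + (QuotientAddGroup.mk (ι ε) : R ⧸ AddSubgroup.zmultiples (1 : R))) ∈
        (fun t : R => (QuotientAddGroup.mk t : R ⧸ AddSubgroup.zmultiples (1 : R))) ''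
          {t : R | ∀ z : ℤ, |z • t| < 1}) :
    ∃ π : (R ⧸ AddSubgroup.zmultiples (1 : R)) ≃ₜ (R ⧸ AddSubgroup.zmultiples (1 : R)),
      ∀ x, π (x + (QuotientAddGroup.mk (ι ε) : R ⧸ AddSubgroup.zmultiples (1 : R))) =
        ρ (π x) := by
  classical
  have hopen : IsOpen
      (((Stmt18Aux.infSub R).map (QuotientAddGroup.mk' (AddSubgroup.zmultiples (1 : R)))) :
        Set (R ⧸ AddSubgroup.zmultiples (1 : R))) := by
    have hc : (((Stmt18Aux.infSub R).map (QuotientAddGroup.mk' (AddSubgroup.zmultiples (1 : R)))) :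
        Set (R ⧸ AddSubgroup.zmultiples (1 : R))) =
        (QuotientAddGroup.mk : R → R ⧸ AddSubgroup.zmultiples (1 : R)) ''
          (Stmt18Aux.infSub R : Set R) := by
      rw [AddSubgroup.coe_map]
      rfl
    rw [hc]
    exact QuotientAddGroup.isOpenMap_coe _ (Stmt18Aux.isOpen_infSub ι hι hproper)
  have hfree : ∀ m : ℤ,
      m • (QuotientAddGroup.mk (ι ε) : R ⧸ AddSubgroup.zmultiples (1 : R)) ∈
        (Stmt18Aux.infSub R).map (QuotientAddGroup.mk' (AddSubgroup.zmultiples (1 : R))) →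
        m = 0 := by
    intro m hm
    obtain ⟨a, ha, hamk⟩ := hm
    have h1 : (QuotientAddGroup.mk (a - m • ι ε) : R ⧸ AddSubgroup.zmultiples (1 : R)) = 0 := by
      rw [QuotientAddGroup.mk_sub, QuotientAddGroup.mk_zsmul]
      rw [show (QuotientAddGroup.mk a : R ⧸ AddSubgroup.zmultiples (1 : R)) =
        m • QuotientAddGroup.mk (ι ε) from hamk]
      simp
    have h2 : a - m • ι ε ∈ AddSubgroup.zmultiples (1 : R) :=
      (QuotientAddGroup.eq_zero_iff _).mp h1
    obtain ⟨k, hk⟩ := AddSubgroup.mem_zmultiples_iff.mp h2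
    have ha' : a = ι ((m : ℝ) * ε + (k : ℝ)) := by
      have e1 : a = (m : R) * ι ε + (k : R) * 1 := by
        have : k • (1 : R) = a - m • ι ε := hk
        rw [zsmul_eq_mul] at this
        rw [zsmul_eq_mul] at this
        linarith
      rw [map_add, map_mul]
      have e2 : ι ((m : ℤ) : ℝ) = ((m : ℤ) : R) := map_intCast ι m
      have e3 : ι ((k : ℤ) : ℝ) = ((k : ℤ) : R) := map_intCast ι k
      rw [e2, e3, e1, mul_one]
    have hzero : (m : ℝ) * ε + (k : ℝ) = 0 := by
      apply Stmt18Aux.real_not_infinitesimal ι hι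
      rw [← ha']
      exact ha
    by_contra hm0
    apply hε
    refine ⟨(-k : ℚ) / (m : ℚ), ?_⟩
    have hm0' : (m : ℝ) ≠ 0 := Int.cast_ne_zero.mpr hm0
    push_cast
    field_simp
    linarith
  have hrho : ∀ x, ρ x - x - (QuotientAddGroup.mk (ι ε) : R ⧸ AddSubgroup.zmultiples (1 : R)) ∈
      (Stmt18Aux.infSub R).map (QuotientAddGroup.mk' (AddSubgroup.zmultiples (1 : R))) := by
    intro x
    obtain ⟨t, ht, hteq⟩ := hρ x
    refine ⟨t, ht, ?_⟩
    show (QuotientAddGroup.mk t : R ⧸ AddSubgroup.zmultiples (1 : R)) = _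
    rw [sub_add_eq_sub_sub] at hteq
    exact hteq
  obtain ⟨π, hπ⟩ := Stmt18Aux.main
    ((Stmt18Aux.infSub R).map (QuotientAddGroup.mk' (AddSubgroup.zmultiples (1 : R))))
    hopen (QuotientAddGroup.mk (ι ε)) hfree ρ hrho
  exact ⟨π, hπ⟩
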